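/- Let Γ be a countably infinite group and let α be a continuous action of Γ on a Polish space X. Let 𝒫 denote the Polish space of all subsets of the (countable) set of finite partial colorings of Γ, with the product (Cantor) topology, and code each subshift Ω by Fin(Ω) ∈ 𝒫. Then the set {Fin(Ω) : Ω is a subshift and α admits a Baire measurable Ω-coloring} is an analytic subset of 𝒫. -/

import Mathlib

open Set Function Topology

namespace DescColor

/-- A set is *Baire measurable* if it differs from an open set by a meager set. -/
def BaireMSet {X : Type*} [TopologicalSpace X] (S : Set X) : Prop :=
  ∃ U : Set X, IsOpen U ∧ IsMeagre (symmDiff S U)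

/-- A function is *Baire measurable* if preimages of measurable (Borel) sets are
Baire measurable. -/
def BaireMFun {X Y : Type*} [TopologicalSpace X] [MeasurableSpace Y] (f : X → Y) : Prop :=
  ∀ B : Set Y, MeasurableSet B → BaireMSet (f ⁻¹' B)

variable {Γ : Type*}

/-- The shift action of `Γ` on colorings `Γ → ℕ`: `(γ · ω)(δ) = ω (δ γ)`. -/
def shift [Group Γ] (γ : Γ) (ω : Γ → ℕ) : Γ → ℕ := fun δ => ω (δ * γ)

/-- A subshift: a closed shift-invariant set of colorings. -/
def IsSubshift [Group Γ] (Ω : Set (Γ → ℕ)) : Prop :=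
  IsClosed Ω ∧ ∀ (γ : Γ), ∀ ω ∈ Ω, shift γ ω ∈ Ω

/-- The coding map `π_f(x)(γ) = f (γ • x)`. -/
def codingMap [Group Γ] {X : Type*} [MulAction Γ X] (f : X → ℕ) (x : X) : Γ → ℕ :=
  fun γ => f (γ • x)

/-- The action of `Γ` on `X` admits a Baire measurable `Ω`-coloring. -/
def HasBMColoring [Group Γ] (X : Type*) [TopologicalSpace X] [MulAction Γ X]
    (Ω : Set (Γ → ℕ)) : Prop :=
  ∃ f : X → ℕ, BaireMFun f ∧ {x : X | codingMap f x ∈ Ω} ∈ residual X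

/-- The action of `Γ` on `X` is generically smooth. -/
def GenSmooth (Γ : Type*) [Group Γ] (X : Type*) [TopologicalSpace X] [MulAction Γ X] : Prop :=
  ∃ f : X → ℝ, BaireMFun f ∧ ∀ x y : X, f x = f y ↔ ∃ γ : Γ, γ • x = y

/-- The shift action of `Γ` on `ℕ^Γ` admits a Baire measurable `Ω`-coloring. -/
def ShiftHasBMColoring (Γ : Type*) [Group Γ] (Ω : Set (Γ → ℕ)) : Prop :=
  ∃ f : (Γ → ℕ) → ℕ, BaireMFun f ∧
    {ω : Γ → ℕ | (fun γ : Γ => f (shift γ ω)) ∈ Ω} ∈ residual (Γ → ℕ)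

/-- A free continuous action of `Γ` on a Polish space. -/
structure FreePolishAction (Γ : Type*) [Group Γ] where
  X : Type
  ts : TopologicalSpace X
  polish : @PolishSpace X ts
  smul : Γ → X → X
  one_smul' : ∀ x, smul 1 x = x
  mul_smul' : ∀ γ δ x, smul (γ * δ) x = smul γ (smul δ x)
  cont : ∀ γ : Γ, @Continuous X X ts ts (smul γ)
  free : ∀ (γ : Γ) (x : X), smul γ x = x → γ = 1

/-- A free continuous action on a Polish space admits a Baire measurable `Ω`-coloring. -/
def FreePolishAction.HasBMCol [Group Γ] (α : FreePolishAction Γ) (Ω : Set (Γ → ℕ)) : Prop :=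
  letI := α.ts
  ∃ f : α.X → ℕ, BaireMFun f ∧ {x : α.X | (fun γ : Γ => f (α.smul γ x)) ∈ Ω} ∈ residual α.X

/-- A free continuous action on a Polish space is generically smooth. -/
def FreePolishAction.IsGenSmooth [Group Γ] (α : FreePolishAction Γ) : Prop :=
  letI := α.ts
  ∃ f : α.X → ℝ, BaireMFun f ∧ ∀ x y : α.X, f x = f y ↔ ∃ γ : Γ, α.smul γ x = y

/-- A subshift is *hard* if every free continuous action of `Γ` on a Polish space that
admits a Baire measurable `Ω`-coloring is generically smooth. -/
def Hard (Γ : Type*) [Group Γ] (Ω : Set (Γ → ℕ)) : Prop :=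
  ∀ α : FreePolishAction Γ, α.HasBMCol Ω → α.IsGenSmooth

/-- A subshift is *easy* if every free continuous action of `Γ` on a Polish space
admits a Baire measurable `Ω`-coloring. -/
def Easy (Γ : Type*) [Group Γ] (Ω : Set (Γ → ℕ)) : Prop :=
  ∀ α : FreePolishAction Γ, α.HasBMCol Ω

/-- Finite partial colorings of `Γ`: partial maps `Γ ⇀ ℕ` with finite domain. -/
abbrev FPC (Γ : Type*) : Type _ := {φ : Γ → Option ℕ // {γ : Γ | φ γ ≠ none}.Finite}

/-- The domain of a finite partial coloring. -/
def domP (φ : FPC Γ) : Set Γ := {γ : Γ | φ.1 γ ≠ none}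

/-- `Fin(Ω)`: the set of finite partial colorings extending to an element of `Ω`. -/
def FinOf (Ω : Set (Γ → ℕ)) : Set (FPC Γ) :=
  {φ | ∃ ω ∈ Ω, ∀ (γ : Γ) (c : ℕ), φ.1 γ = some c → ω γ = c}

/-- `g : FPC Γ → Bool` codes (the set `Fin(Ω)` of) the subshift `Ω`. -/
def CodesSubshift [Group Γ] (g : FPC Γ → Bool) (Ω : Set (Γ → ℕ)) : Prop :=
  IsSubshift Ω ∧ ∀ φ : FPC Γ, g φ = true ↔ φ ∈ FinOf Ω

/-- The shift action of `Γ` on finite partial colorings: `(γ · φ)(δ) = φ(δγ)`. -/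
def shiftP [Group Γ] (γ : Γ) (φ : FPC Γ) : FPC Γ :=
  ⟨fun δ => φ.1 (δ * γ), by
    apply (φ.2.image fun δ => δ * γ⁻¹).subset
    intro δ hδ
    exact ⟨δ * γ, hδ, by simp⟩⟩

/-- The empty partial coloring. -/
def emptyP (Γ : Type*) : FPC Γ := ⟨fun _ => none, by simp⟩

/-- The union (join) of two partial colorings (values of `φ` take precedence). -/
def joinP (φ ψ : FPC Γ) : FPC Γ :=
  ⟨fun δ => match φ.1 δ with | some c => some c | none => ψ.1 δ, by
    apply (φ.2.union ψ.2).subset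
    intro δ hδ
    by_cases h : φ.1 δ = none
    · right
      simp only [mem_setOf_eq, h] at hδ
      exact hδ
    · exact Or.inl h⟩

/-- The union of a finite list of partial colorings. -/
def joinList (l : List (FPC Γ)) : FPC Γ := l.foldr joinP (emptyP Γ)

/-- `φ[γ, r]`: the restriction of `φ` to the closed ball `B(γ, r)`. -/
noncomputable def restrictBall [MetricSpace Γ] (φ : FPC Γ) (γ : Γ) (r : ℝ) : FPC Γ :=
  ⟨fun δ => if dist γ δ ≤ r then φ.1 δ else none, by
    apply φ.2.subset
    intro δ hδ
    by_cases h : dist γ δ ≤ r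
    · simp only [mem_setOf_eq, if_pos h] at hδ
      exact hδ
    · simp only [mem_setOf_eq, if_neg h] at hδ
      exact absurd rfl hδ⟩

/-- `φ ∪ {(γ, c)}`. -/
def insertP [DecidableEq Γ] (φ : FPC Γ) (γ : Γ) (c : ℕ) : FPC Γ :=
  ⟨fun δ => if δ = γ then some c else φ.1 δ, by
    apply (φ.2.insert γ).subset
    intro δ hδ
    by_cases h : δ = γ
    · exact Or.inl h
    · right
      simp only [mem_setOf_eq, if_neg h] at hδ
      exact hδ⟩

/-- The restriction of a total coloring `ω` to a finite set `S`. -/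
def restrictTo [DecidableEq Γ] (ω : Γ → ℕ) (S : Finset Γ) : FPC Γ :=
  ⟨fun δ => if δ ∈ S then some (ω δ) else none, by
    apply S.finite_toSet.subset
    intro δ hδ
    by_cases h : δ ∈ S
    · exact h
    · simp only [mem_setOf_eq, if_neg h] at hδ
      exact absurd rfl hδ⟩

/-- Post-composition of a partial coloring with `ρ : ℕ → ℕ`. -/
def mapP (ρ : ℕ → ℕ) (φ : FPC Γ) : FPC Γ :=
  ⟨fun δ => (φ.1 δ).map ρ, by
    apply φ.2.subset
    intro δ hδ
    intro h
    simp only [mem_setOf_eq, h] at hδ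
    exact hδ rfl⟩

/-- `ψ` is a restriction of `φ`. -/
def IsRestrictionOf (ψ φ : FPC Γ) : Prop := ∀ δ : Γ, ψ.1 δ = none ∨ ψ.1 δ = φ.1 δ

/-- A `Γ`-ideal: a shift-invariant set of finite partial colorings closed under
restrictions. -/
def IsGammaIdeal [Group Γ] (P : Set (FPC Γ)) : Prop :=
  (∀ (γ : Γ), ∀ φ ∈ P, shiftP γ φ ∈ P) ∧
  (∀ φ ∈ P, ∀ ψ : FPC Γ, IsRestrictionOf ψ φ → ψ ∈ P)

/-- An extendable `Γ`-ideal. -/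
def IsExtendable [DecidableEq Γ] (P : Set (FPC Γ)) : Prop :=
  ∀ φ ∈ P, ∀ γ : Γ, φ.1 γ = none → ∃ c : ℕ, insertP φ γ c ∈ P

/-- `φ` and `ψ` are `R`-separated: `dist(dom φ, dom ψ) > R φ + R ψ`. -/
def RSeparated [MetricSpace Γ] (R : FPC Γ → ℝ) (φ ψ : FPC Γ) : Prop :=
  ∀ γ ∈ domP φ, ∀ δ ∈ domP ψ, R φ + R ψ < dist γ δ

/-- The join property of a `Γ`-ideal `P`. -/
def HasJoinProperty [Group Γ] [MetricSpace Γ] (P : Set (FPC Γ)) : Prop :=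
  ∃ R : FPC Γ → ℝ, (∀ φ, 0 ≤ R φ) ∧ (∀ (γ : Γ), ∀ φ ∈ P, R (shiftP γ φ) = R φ) ∧
    ∀ l : List (FPC Γ), (∀ φ ∈ l, φ ∈ P) → l.Pairwise (RSeparated R) → joinList l ∈ P

/-- `P^loc_r`: partial colorings that are `r`-locally in `P`. -/
def LocallyIn [MetricSpace Γ] (P : Set (FPC Γ)) (r : ℕ → ℝ) : Set (FPC Γ) :=
  {φ | ∀ (γ : Γ) (c : ℕ), φ.1 γ = some c → restrictBall φ γ (r c) ∈ P}

/-- A local `Γ`-ideal. -/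
def IsLocal [MetricSpace Γ] (P : Set (FPC Γ)) : Prop :=
  ∃ r : ℕ → ℝ, (∀ c, 0 ≤ r c) ∧ P = LocallyIn P r

/-- `Col(P)`: colorings all of whose finite restrictions lie in `P`. -/
def ColOf [DecidableEq Γ] (P : Set (FPC Γ)) : Set (Γ → ℕ) :=
  {ω | ∀ S : Finset Γ, restrictTo ω S ∈ P}

/-! ### The space of Baire measurable functions -/

/-- Baire measurable functions from `X` to `Y`. -/
abbrev BMFunSub (X Y : Type*) [TopologicalSpace X] [MeasurableSpace Y] :=
  {f : X → Y // BaireMFun f}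

/-- Equality on a comeager set. -/
def BFunRel {X Y : Type*} [TopologicalSpace X] [MeasurableSpace Y]
    (f g : BMFunSub X Y) : Prop := {x : X | f.1 x = g.1 x} ∈ residual X

/-- `B(X,Y)`: Baire measurable functions modulo equality on a comeager set. -/
abbrev BFun (X Y : Type*) [TopologicalSpace X] [MeasurableSpace Y] :=
  Quot (BFunRel (X := X) (Y := Y))

/-- `[U, A]`: the classes of functions `f` with `U ∖ f⁻¹(A)` meager. -/
def forceSet {X Y : Type*} [TopologicalSpace X] [MeasurableSpace Y]
    (U : Set X) (A : Set Y) : Set (BFun X Y) :=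
  {F | ∃ f : BMFunSub X Y, Quot.mk BFunRel f = F ∧ IsMeagre (U \ f.1 ⁻¹' A)}

/-- `Σ(X,Y)`: the σ-algebra generated by the sets `[U, A]` for `U` nonempty open
and `A` Borel. -/
def SigmaXY (X Y : Type*) [TopologicalSpace X] [MeasurableSpace Y] :
    MeasurableSpace (BFun X Y) :=
  MeasurableSpace.generateFrom
    {S | ∃ (U : Set X) (A : Set Y), IsOpen U ∧ U.Nonempty ∧ MeasurableSet A ∧ S = forceSet U A}


/-! ### Auxiliary material for `stmt2` -/

section Stmt2Aux

instance FPC.countable [Countable Γ] : Countable (FPC Γ) := by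
  classical
  have key : ∀ φ : FPC Γ, {q : Γ × ℕ | φ.1 q.1 = some q.2}.Finite := by
    intro φ
    apply Set.Finite.of_finite_image (f := Prod.fst)
    · apply φ.2.subset
      rintro γ ⟨⟨γ', c⟩, hq, rfl⟩
      simp only [mem_setOf_eq] at hq ⊢
      simp [hq]
    · rintro ⟨γ, c⟩ hq ⟨γ', c'⟩ hq' (h : γ = γ')
      subst h
      simp only [mem_setOf_eq] at hq hq'
      rw [hq] at hq'
      cases hq'
      rfl
  have hinj : Function.Injective (fun φ : FPC Γ => (key φ).toFinset) := by
    intro φ ψ hfeq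
    apply Subtype.ext
    funext δ
    have hset : {q : Γ × ℕ | φ.1 q.1 = some q.2} = {q : Γ × ℕ | ψ.1 q.1 = some q.2} := by
      have := congrArg (fun s : Finset (Γ × ℕ) => (s : Set (Γ × ℕ))) hfeq
      simpa [Set.Finite.coe_toFinset] using this
    cases hφ : φ.1 δ with
    | none =>
      cases hψ : ψ.1 δ with
      | none => rfl
      | some c =>
        have : (δ, c) ∈ {q : Γ × ℕ | φ.1 q.1 = some q.2} := by rw [hset]; exact hψ
        rw [mem_setOf_eq] at this
        rw [hφ] at this
        cases this
    | some c =>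
      have : (δ, c) ∈ {q : Γ × ℕ | ψ.1 q.1 = some q.2} := by rw [← hset]; exact hφ
      rw [mem_setOf_eq] at this
      exact this.symm
  exact hinj.countable

/-! #### Basic lemmas on partial colorings -/

variable {X : Type*}

/-- The closed set of colorings determined by a code `g`. -/
def OmegaOf [DecidableEq Γ] (g : FPC Γ → Bool) : Set (Γ → ℕ) :=
  {ω | ∀ S : Finset Γ, g (restrictTo ω S) = true}

lemma restrictTo_fst [DecidableEq Γ] (ω : Γ → ℕ) (S : Finset Γ) (δ : Γ) :
    (restrictTo ω S).1 δ = if δ ∈ S then some (ω δ) else none := rfl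

lemma restrictTo_eq_self [DecidableEq Γ] (φ : FPC Γ) (ω : Γ → ℕ)
    (hext : ∀ γ c, φ.1 γ = some c → ω γ = c) :
    restrictTo ω φ.2.toFinset = φ := by
  apply Subtype.ext
  funext δ
  rw [restrictTo_fst]
  by_cases hδ : φ.1 δ = none
  · rw [if_neg, hδ]
    simp [Set.Finite.mem_toFinset, hδ]
  · obtain ⟨c, hc⟩ := Option.ne_none_iff_exists'.mp hδ
    rw [if_pos (by simp [Set.Finite.mem_toFinset, hδ]), hext δ c hc, hc]

lemma g_of_mem_FinOf [DecidableEq Γ] {g : FPC Γ → Bool} {φ : FPC Γ}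
    (h : φ ∈ FinOf (OmegaOf g)) : g φ = true := by
  obtain ⟨ω, hω, hext⟩ := h
  have := hω φ.2.toFinset
  rwa [restrictTo_eq_self φ ω hext] at this

lemma restrictTo_congr [DecidableEq Γ] {ω ω' : Γ → ℕ} (S : Finset Γ)
    (h : ∀ γ ∈ S, ω' γ = ω γ) : restrictTo ω' S = restrictTo ω S := by
  apply Subtype.ext
  funext δ
  rw [restrictTo_fst, restrictTo_fst]
  by_cases hδ : δ ∈ S
  · rw [if_pos hδ, if_pos hδ, h δ hδ]
  · rw [if_neg hδ, if_neg hδ]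

lemma isClosed_OmegaOf [DecidableEq Γ] (g : FPC Γ → Bool) : IsClosed (OmegaOf g) := by
  have hopen : ∀ (S : Finset Γ) (ψ : FPC Γ), IsOpen {ω : Γ → ℕ | restrictTo ω S = ψ} := by
    intro S ψ
    rw [isOpen_iff_mem_nhds]
    intro ω hω
    have hV : {ω' : Γ → ℕ | ∀ γ ∈ S, ω' γ = ω γ} ∈ nhds ω := by
      rw [show {ω' : Γ → ℕ | ∀ γ ∈ S, ω' γ = ω γ}
          = ⋂ γ ∈ S, (fun ω' : Γ → ℕ => ω' γ) ⁻¹' {ω γ} from by ext; simp]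
      refine (Filter.biInter_finset_mem S).mpr fun γ _ => ?_
      exact IsOpen.mem_nhds ((continuous_apply γ).isOpen_preimage _ (isOpen_discrete _)) rfl
    refine Filter.mem_of_superset hV fun ω' hω' => ?_
    show restrictTo ω' S = ψ
    rw [restrictTo_congr S hω']
    exact hω
  have hcompl : OmegaOf g
      = (⋃ S : Finset Γ, ⋃ ψ : FPC Γ, ⋃ (_ : g ψ = false), {ω | restrictTo ω S = ψ})ᶜ := by
    ext ω
    simp only [OmegaOf, mem_setOf_eq, mem_compl_iff, mem_iUnion, not_exists]
    constructor
    · rintro h S ψ hψ rfl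
      rw [h S] at hψ
      cases hψ
    · intro h S
      by_contra hne
      exact h S (restrictTo ω S) (by revert hne; cases g (restrictTo ω S) <;> simp) rfl
  rw [hcompl]
  exact (isOpen_iUnion fun S => isOpen_iUnion fun ψ => isOpen_iUnion fun _ => hopen S ψ).isClosed_compl

lemma shiftP_fst [Group Γ] (γ : Γ) (φ : FPC Γ) (δ : Γ) : (shiftP γ φ).1 δ = φ.1 (δ * γ) := rfl

lemma shiftP_shiftP [Group Γ] (γ : Γ) (φ : FPC Γ) : shiftP γ⁻¹ (shiftP γ φ) = φ := by
  apply Subtype.ext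
  funext δ
  show φ.1 (δ * γ⁻¹ * γ) = φ.1 δ
  rw [inv_mul_cancel_right]

lemma shiftP_restrictTo [Group Γ] [DecidableEq Γ] (γ : Γ) (ω : Γ → ℕ) (S : Finset Γ) :
    shiftP γ (restrictTo ω (S.image (· * γ))) = restrictTo (shift γ ω) S := by
  apply Subtype.ext
  funext δ
  show (if δ * γ ∈ S.image (· * γ) then some (ω (δ * γ)) else none)
      = if δ ∈ S then some (ω (δ * γ)) else none
  have hmem : (δ * γ ∈ S.image (· * γ)) ↔ δ ∈ S := by
    simp only [Finset.mem_image]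
    constructor
    · rintro ⟨a, ha, h⟩
      rwa [← (mul_left_inj γ).mp h]
    · intro h
      exact ⟨δ, h, rfl⟩
  by_cases hδ : δ ∈ S
  · rw [if_pos (hmem.mpr hδ), if_pos hδ]
  · rw [if_neg (fun hc => hδ (hmem.mp hc)), if_neg hδ]

lemma FinOf_shift [Group Γ] {Ω : Set (Γ → ℕ)} (hinv : ∀ (γ : Γ), ∀ ω ∈ Ω, shift γ ω ∈ Ω)
    (γ : Γ) {φ : FPC Γ} (h : φ ∈ FinOf Ω) : shiftP γ φ ∈ FinOf Ω := by
  obtain ⟨ω, hω, hext⟩ := h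
  exact ⟨shift γ ω, hinv γ ω hω, fun δ c hc => hext (δ * γ) c hc⟩

/-! #### The coding conditions -/

/-- `g` is invariant under the shift on partial colorings. -/
def condA [Group Γ] (g : FPC Γ → Bool) : Prop :=
  ∀ (γ : Γ) (φ : FPC Γ), g (shiftP γ φ) = g φ

/-- `w` provides total extensions witnessing membership in `Fin(Ω)`. -/
def condW [DecidableEq Γ] (g : FPC Γ → Bool) (w : FPC Γ → Γ → ℕ) : Prop :=
  ∀ φ : FPC Γ, g φ = true →
    (∀ (γ : Γ) (c : ℕ), φ.1 γ = some c → w φ γ = c) ∧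
      ∀ S : Finset Γ, g (restrictTo (w φ) S) = true

/-- The open sets coded by `h`. -/
def UOf (B : ℕ → Set X) (h : ℕ → ℕ → Bool) (c : ℕ) : Set X :=
  ⋃ m ∈ {m : ℕ | h c m = true}, B m

/-- The colors have disjoint coded sets. -/
def condD1 (B : ℕ → Set X) (h : ℕ → ℕ → Bool) : Prop :=
  ∀ c c' m m', c ≠ c' → h c m = true → h c' m' = true → B m ∩ B m' = ∅

/-- The union of the coded sets is dense. -/
def condD2 (B : ℕ → Set X) (h : ℕ → ℕ → Bool) : Prop :=
  ∀ k, (B k).Nonempty → ∃ c m, h c m = true ∧ (B m ∩ B k).Nonempty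

/-- Forbidden patterns are generically avoided. -/
def condC [Group Γ] [MulAction Γ X] (B : ℕ → Set X) (g : FPC Γ → Bool)
    (h : ℕ → ℕ → Bool) : Prop :=
  ∀ (S : Finset Γ) (ψ : FPC Γ), (∀ γ : Γ, γ ∈ S ↔ ψ.1 γ ≠ none) → g ψ = false →
    ∀ m : {γ : Γ // γ ∈ S} → ℕ, (∀ γ : {γ : Γ // γ ∈ S}, h ((ψ.1 γ.1).getD 0) (m γ) = true) →
      (⋂ γ : {γ : Γ // γ ∈ S}, (fun x : X => γ.1 • x) ⁻¹' B (m γ)) = ∅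

open scoped Classical in
/-- The function coded by `h`. -/
noncomputable def fOf (B : ℕ → Set X) (h : ℕ → ℕ → Bool) (x : X) : ℕ :=
  if hx : ∃ c, x ∈ UOf B h c then hx.choose else 0

set_option linter.unusedSectionVars false

variable [TopologicalSpace X]

lemma isOpen_UOf {B : ℕ → Set X} (hBo : ∀ n, IsOpen (B n)) (h : ℕ → ℕ → Bool) (c : ℕ) :
    IsOpen (UOf B h c) :=
  isOpen_biUnion fun m _ => hBo m

lemma UOf_disjoint {B : ℕ → Set X} {h : ℕ → ℕ → Bool} (hD1 : condD1 B h)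
    {c c' : ℕ} (hcc : c ≠ c') : UOf B h c ∩ UOf B h c' = ∅ := by
  rw [eq_empty_iff_forall_notMem]
  rintro x ⟨hx, hx'⟩
  obtain ⟨m, hm, hxm⟩ := mem_iUnion₂.mp hx
  obtain ⟨m', hm', hxm'⟩ := mem_iUnion₂.mp hx'
  have := hD1 c c' m m' hcc hm hm'
  rw [eq_empty_iff_forall_notMem] at this
  exact this x ⟨hxm, hxm'⟩

lemma fOf_eq {B : ℕ → Set X} {h : ℕ → ℕ → Bool} (hD1 : condD1 B h)
    {x : X} {c : ℕ} (hx : x ∈ UOf B h c) : fOf B h x = c := by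
  have hex : ∃ c, x ∈ UOf B h c := ⟨c, hx⟩
  rw [fOf, dif_pos hex]
  by_contra hne
  have hdis := UOf_disjoint hD1 hne
  rw [eq_empty_iff_forall_notMem] at hdis
  exact hdis x ⟨hex.choose_spec, hx⟩

lemma open_meagre_empty [BaireSpace X] {U : Set X} (hU : IsOpen U) (hm : IsMeagre U) :
    U = ∅ := by
  have hd : Dense Uᶜ := dense_of_mem_residual hm
  rw [eq_empty_iff_forall_notMem]
  intro x hx
  obtain ⟨y, hyU, hyc⟩ := hd.inter_open_nonempty U hU ⟨x, hx⟩
  exact hyc hyU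

lemma isMeagre_iUnion' {ι : Type*} [Countable ι] {s : ι → Set X}
    (h : ∀ i, IsMeagre (s i)) : IsMeagre (⋃ i, s i) := by
  rw [IsMeagre, compl_iUnion]
  exact countable_iInter_mem.mpr h

lemma NC_meagre {B : ℕ → Set X} {h : ℕ → ℕ → Bool} (hBo : ∀ n, IsOpen (B n))
    (hBb : ∀ O : Set X, IsOpen O → ∀ x ∈ O, ∃ n, x ∈ B n ∧ B n ⊆ O)
    (hD2 : condD2 B h) : IsMeagre ((⋃ c, UOf B h c)ᶜ) := by
  rw [IsMeagre, compl_compl]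
  apply residual_of_dense_open (isOpen_iUnion fun c => isOpen_UOf hBo h c)
  rw [dense_iff_inter_open]
  intro U hU ⟨x, hx⟩
  obtain ⟨k, hxk, hkU⟩ := hBb U hU x hx
  obtain ⟨c, m, hcm, y, hym, hyk⟩ := hD2 k ⟨x, hxk⟩
  exact ⟨y, hkU hyk, mem_iUnion.mpr ⟨c, mem_iUnion₂.mpr ⟨m, hcm, hym⟩⟩⟩

lemma OmegaOf_shift [Group Γ] [DecidableEq Γ] {g : FPC Γ → Bool} (hA : condA g) :
    ∀ (γ : Γ), ∀ ω ∈ OmegaOf g, shift γ ω ∈ OmegaOf g := by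
  intro γ ω hω S
  rw [← shiftP_restrictTo γ ω S, hA]
  exact hω _

lemma key_mpr [Group Γ] [Countable Γ] [DecidableEq Γ] [BaireSpace X] [MulAction Γ X]
    (hcont : ∀ γ : Γ, Continuous fun x : X => γ • x)
    (B : ℕ → Set X) (hBo : ∀ n, IsOpen (B n))
    (hBb : ∀ O : Set X, IsOpen O → ∀ x ∈ O, ∃ n, x ∈ B n ∧ B n ⊆ O)
    {g : FPC Γ → Bool} {h : ℕ → ℕ → Bool} {w : FPC Γ → Γ → ℕ}
    (hA : condA g) (hW : condW g w) (hD1 : condD1 B h) (hD2 : condD2 B h)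
    (hC : condC B g h) :
    CodesSubshift g (OmegaOf g) ∧ HasBMColoring X (OmegaOf g) := by
  have hNC : IsMeagre ((⋃ c, UOf B h c)ᶜ) := NC_meagre hBo hBb hD2
  constructor
  · refine ⟨⟨isClosed_OmegaOf g, OmegaOf_shift hA⟩, fun φ => ⟨fun hφ => ?_, g_of_mem_FinOf⟩⟩
    obtain ⟨hext, hall⟩ := hW φ hφ
    exact ⟨w φ, hall, hext⟩
  · refine ⟨fOf B h, ?_, ?_⟩
    · -- Baire measurability of `fOf B h`
      intro A hA'
      refine ⟨⋃ c ∈ A, UOf B h c, isOpen_biUnion fun c _ => isOpen_UOf hBo h c, ?_⟩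
      refine IsMeagre.mono ?_ hNC
      intro x hx
      rw [Set.mem_symmDiff] at hx
      intro hxU
      obtain ⟨c, hc⟩ := mem_iUnion.mp hxU
      have hfx : fOf B h x = c := fOf_eq hD1 hc
      rcases hx with ⟨hx1, hx2⟩ | ⟨hx1, hx2⟩
      · exact hx2 (mem_iUnion₂.mpr ⟨c, hfx ▸ hx1, hc⟩)
      · obtain ⟨c', hc', hxc'⟩ := mem_iUnion₂.mp hx1
        have : fOf B h x = c' := fOf_eq hD1 hxc'
        exact hx2 (show fOf B h x ∈ A from this ▸ hc')
    · -- the coloring is generically in `OmegaOf g`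
      have hrw : {x : X | codingMap (fOf B h) x ∈ OmegaOf g}
          = ⋂ S : Finset Γ, {x : X | g (restrictTo (codingMap (fOf B h) x) S) = true} := by
        ext x
        simp only [OmegaOf, mem_setOf_eq, mem_iInter]
      rw [hrw]
      apply countable_iInter_mem.mpr
      intro S
      have hsub : {x : X | g (restrictTo (codingMap (fOf B h) x) S) = true}ᶜ
          ⊆ ⋃ γ ∈ S, (fun x : X => γ • x) ⁻¹' (⋃ c, UOf B h c)ᶜ := by
        intro x hx
        by_contra hxn
        simp only [mem_iUnion, mem_preimage, mem_compl_iff, not_exists, not_not] at hxn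
        have hch : ∀ γ : {γ : Γ // γ ∈ S},
            ∃ m, h (fOf B h (γ.1 • x)) m = true ∧ γ.1 • x ∈ B m := by
          rintro ⟨γ, hγ⟩
          obtain ⟨c, hc'⟩ := not_forall.mp (hxn γ hγ)
          have hc := not_not.mp hc'
          have hfc : fOf B h (γ • x) = c := fOf_eq hD1 hc
          obtain ⟨m, hm, hxm⟩ := mem_iUnion₂.mp hc
          exact ⟨m, by rwa [hfc], hxm⟩
        choose m hm1 hm2 using hch
        set ψ := restrictTo (codingMap (fOf B h) x) S with hψdef
        have hdom : ∀ γ : Γ, γ ∈ S ↔ ψ.1 γ ≠ none := by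
          intro γ
          rw [hψdef, restrictTo_fst]
          by_cases hγ : γ ∈ S <;> simp [hγ]
        have hfalse : g ψ = false := by
          have : ¬ g ψ = true := hx
          revert this; cases g ψ <;> simp
        have hval : ∀ γ : {γ : Γ // γ ∈ S}, (ψ.1 γ.1).getD 0 = fOf B h (γ.1 • x) := by
          rintro ⟨γ, hγ⟩
          rw [hψdef, restrictTo_fst, if_pos hγ]
          rfl
        have hempty := hC S ψ hdom hfalse m (fun γ => by rw [hval γ]; exact hm1 γ)
        have hxmem : x ∈ ⋂ γ : {γ : Γ // γ ∈ S}, (fun x : X => γ.1 • x) ⁻¹' B (m γ) :=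
          mem_iInter.mpr fun γ => hm2 γ
        rw [hempty] at hxmem
        exact hxmem
      have hmeag : IsMeagre (⋃ γ ∈ S, (fun x : X => γ • x) ⁻¹' (⋃ c, UOf B h c)ᶜ) := by
        have hbi : (⋃ γ ∈ S, (fun x : X => γ • x) ⁻¹' (⋃ c, UOf B h c)ᶜ)
            = ⋃ γ : {γ : Γ // γ ∈ S}, (fun x : X => γ.1 • x) ⁻¹' (⋃ c, UOf B h c)ᶜ := by
          ext y
          simp only [mem_iUnion]
          exact ⟨fun ⟨γ, hγ, hy⟩ => ⟨⟨γ, hγ⟩, hy⟩, fun ⟨⟨γ, hγ⟩, hy⟩ => ⟨γ, hγ, hy⟩⟩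
        rw [hbi]
        exact isMeagre_iUnion' fun γ =>
          hNC.preimage_of_isOpenMap (hcont γ.1)
            (by
              haveI : ContinuousConstSMul Γ X := ⟨hcont⟩
              exact (Homeomorph.smul γ.1).isOpenMap)
      have : IsMeagre {x : X | g (restrictTo (codingMap (fOf B h) x) S) = true}ᶜ :=
        hmeag.mono hsub
      rw [IsMeagre, compl_compl] at this
      exact this

lemma key_mp [Group Γ] [DecidableEq Γ] [BaireSpace X] [MulAction Γ X]
    (hcont : ∀ γ : Γ, Continuous fun x : X => γ • x)
    (B : ℕ → Set X) (hBo : ∀ n, IsOpen (B n))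
    (hBb : ∀ O : Set X, IsOpen O → ∀ x ∈ O, ∃ n, x ∈ B n ∧ B n ⊆ O)
    {g : FPC Γ → Bool} {Ω : Set (Γ → ℕ)}
    (hcode : CodesSubshift g Ω) (hbm : HasBMColoring X Ω) :
    ∃ (h : ℕ → ℕ → Bool) (w : FPC Γ → Γ → ℕ),
      condA g ∧ condW g w ∧ condD1 B h ∧ condD2 B h ∧ condC B g h := by
  classical
  obtain ⟨⟨hcl, hinv⟩, hiff⟩ := hcode
  obtain ⟨f, hfBM, hfres⟩ := hbm
  -- open sets approximating the fibers of `f`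
  have hWc : ∀ c : ℕ, ∃ W : Set X, IsOpen W ∧ IsMeagre (symmDiff (f ⁻¹' {c}) W) :=
    fun c => hfBM {c} (measurableSet_singleton c)
  choose W hWo hWm using hWc
  set M := ⋃ c, symmDiff (f ⁻¹' {c}) (W c) with hMdef
  have hMm : IsMeagre M := isMeagre_iUnion' hWm
  have hDres : Mᶜ ∈ residual X := hMm
  have hGD : ∀ {x : X} {c : ℕ}, x ∈ Mᶜ → (f x = c ↔ x ∈ W c) := by
    intro x c hx
    have hxM : x ∉ M := hx
    constructor
    · intro hfx
      by_contra hWx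
      exact hxM (mem_iUnion.mpr ⟨c, Set.mem_symmDiff.mpr (Or.inl ⟨hfx, hWx⟩)⟩)
    · intro hWx
      by_contra hfx
      exact hxM (mem_iUnion.mpr ⟨c, Set.mem_symmDiff.mpr (Or.inr ⟨hWx, hfx⟩)⟩)
  set h : ℕ → ℕ → Bool := fun c m => if B m ⊆ W c then true else false with hhdef
  have hh : ∀ c m, h c m = true ↔ B m ⊆ W c := by
    intro c m
    by_cases hcm : B m ⊆ W c <;> simp [hhdef, hcm]
  set w : FPC Γ → Γ → ℕ := fun φ => if hφ : φ ∈ FinOf Ω then hφ.choose else fun _ => 0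
    with hwdef
  refine ⟨h, w, ?_, ?_, ?_, ?_, ?_⟩
  · -- condA
    intro γ φ
    cases hgφ : g φ with
    | true => exact (hiff _).mpr (FinOf_shift hinv γ ((hiff φ).mp hgφ))
    | false =>
      by_contra hne
      have h1 : g (shiftP γ φ) = true := by
        revert hne; cases g (shiftP γ φ) <;> simp
      have h2 : φ ∈ FinOf Ω := by
        have := FinOf_shift hinv γ⁻¹ ((hiff _).mp h1)
        rwa [shiftP_shiftP] at this
      rw [(hiff φ).mpr h2] at hgφ
      cases hgφ
  · -- condW
    intro φ hφ
    have hmem : φ ∈ FinOf Ω := (hiff φ).mp hφ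
    obtain ⟨hΩm, hext⟩ := hmem.choose_spec
    constructor
    · intro γ c hc
      rw [hwdef]
      simp only [dif_pos hmem]
      exact hext γ c hc
    · intro S
      apply (hiff _).mpr
      refine ⟨hmem.choose, hΩm, ?_⟩
      intro γ c hc
      rw [restrictTo_fst] at hc
      by_cases hγ : γ ∈ S
      · rw [if_pos hγ] at hc
        have : w φ γ = c := Option.some_inj.mp hc
        rw [hwdef] at this
        simpa only [dif_pos hmem] using this
      · rw [if_neg hγ] at hc
        cases hc
  · -- condD1
    intro c c' m m' hcc hcm hcm'
    have hsub : B m ∩ B m' ⊆ W c ∩ W c' :=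
      inter_subset_inter ((hh _ _).mp hcm) ((hh _ _).mp hcm')
    have hmeag : IsMeagre (W c ∩ W c') := by
      apply hMm.mono
      rintro x ⟨hx1, hx2⟩
      by_contra hxM
      have hxD : x ∈ Mᶜ := hxM
      have e1 : f x = c := (hGD hxD).mpr hx1
      have e2 : f x = c' := (hGD hxD).mpr hx2
      exact hcc (e1 ▸ e2)
    have hempty : W c ∩ W c' = ∅ :=
      open_meagre_empty ((hWo c).inter (hWo c')) hmeag
    exact eq_empty_of_subset_empty (hempty ▸ hsub)
  · -- condD2
    rintro k ⟨x, hxk⟩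
    have hDd : Dense Mᶜ := dense_of_mem_residual hDres
    obtain ⟨y, hyk, hyD⟩ := hDd.inter_open_nonempty (B k) (hBo k) ⟨x, hxk⟩
    have hyW : y ∈ W (f y) := (hGD hyD).mp rfl
    obtain ⟨m, hym, hmsub⟩ := hBb (B k ∩ W (f y)) ((hBo k).inter (hWo _)) y ⟨hyk, hyW⟩
    exact ⟨f y, m, (hh _ _).mpr (hmsub.trans inter_subset_right),
      ⟨y, hym, (hmsub.trans inter_subset_left) hym⟩⟩
  · -- condC
    intro S ψ hdom hfalse m hm
    haveI : ContinuousConstSMul Γ X := ⟨hcont⟩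
    set O : Set X := ⋂ γ : {γ : Γ // γ ∈ S}, (fun x : X => γ.1 • x) ⁻¹' B (m γ) with hOdef
    have hOopen : IsOpen O :=
      isOpen_iInter_of_finite fun γ => (hBo _).preimage (hcont γ.1)
    set D' : Set X := {x | codingMap f x ∈ Ω}
        ∩ ⋂ γ : {γ : Γ // γ ∈ S}, (fun x : X => γ.1 • x) ⁻¹' Mᶜ with hD'def
    have hD'res : D' ∈ residual X := by
      apply Filter.inter_mem hfres
      apply countable_iInter_mem.mpr
      intro γ
      exact tendsto_residual_of_isOpenMap (hcont γ.1) (Homeomorph.smul γ.1).isOpenMap hDres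
    have hOD : O ∩ D' = ∅ := by
      rw [eq_empty_iff_forall_notMem]
      rintro x ⟨hxO, hxΩ, hxD⟩
      have hψ : restrictTo (codingMap f x) S = ψ := by
        apply Subtype.ext
        funext δ
        rw [restrictTo_fst]
        by_cases hδ : δ ∈ S
        · rw [if_pos hδ]
          obtain ⟨c, hc⟩ := Option.ne_none_iff_exists'.mp ((hdom δ).mp hδ)
          rw [hc]
          have hBW : B (m ⟨δ, hδ⟩) ⊆ W ((ψ.1 δ).getD 0) := (hh _ _).mp (hm ⟨δ, hδ⟩)
          have hxB : δ • x ∈ B (m ⟨δ, hδ⟩) := mem_iInter.mp hxO ⟨δ, hδ⟩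
          have hxD' : δ • x ∈ Mᶜ := mem_iInter.mp hxD ⟨δ, hδ⟩
          have hfval : f (δ • x) = (ψ.1 δ).getD 0 := (hGD hxD').mpr (hBW hxB)
          rw [hc] at hfval
          simp only [Option.getD_some] at hfval
          exact congrArg some hfval
        · rw [if_neg hδ]
          by_contra hne
          exact hδ ((hdom δ).mpr fun hn => hne hn.symm)
      have hgψ : g ψ = true := by
        apply (hiff ψ).mpr
        refine ⟨codingMap f x, hxΩ, ?_⟩
        intro γ c hc
        rw [← hψ, restrictTo_fst] at hc
        by_cases hγ : γ ∈ S
        · rw [if_pos hγ] at hc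
          exact Option.some_inj.mp hc
        · rw [if_neg hγ] at hc
          cases hc
      rw [hgψ] at hfalse
      cases hfalse
    have hOm : IsMeagre O := by
      have hD'c : IsMeagre D'ᶜ := by
        show D'ᶜᶜ ∈ residual X
        rwa [compl_compl]
      apply hD'c.mono
      intro x hxO hxD'
      exact eq_empty_iff_forall_notMem.mp hOD x ⟨hxO, hxD'⟩
    exact open_meagre_empty hOopen hOm

/-! #### Measurability of the coding conditions -/

section MeasSection

variable [Group Γ] [Countable Γ] [DecidableEq Γ] [MulAction Γ X]

local notation "PS" => ((FPC Γ → Bool) × (ℕ → ℕ → Bool) × (FPC Γ → Γ → ℕ))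

lemma measG (φ : FPC Γ) (b : Bool) : MeasurableSet {p : PS | p.1 φ = b} := by
  have hm : Measurable fun p : PS => p.1 φ := (measurable_pi_apply φ).comp measurable_fst
  exact hm (measurableSet_singleton b)

lemma measH (c k : ℕ) (b : Bool) : MeasurableSet {p : PS | p.2.1 c k = b} := by
  have hm : Measurable fun p : PS => p.2.1 c k :=
    (measurable_pi_apply k).comp ((measurable_pi_apply c).comp
      (measurable_fst.comp measurable_snd))
  exact hm (measurableSet_singleton b)

lemma measWcoord (φ : FPC Γ) (γ : Γ) (n : ℕ) : MeasurableSet {p : PS | p.2.2 φ γ = n} := by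
  have hm : Measurable fun p : PS => p.2.2 φ γ :=
    (measurable_pi_apply γ).comp ((measurable_pi_apply φ).comp
      (measurable_snd.comp measurable_snd))
  exact hm (measurableSet_singleton n)

lemma measA : MeasurableSet {p : PS | condA p.1} := by
  have hrw : {p : PS | condA p.1}
      = ⋂ γ : Γ, ⋂ φ : FPC Γ,
          ⋃ b : Bool, ({p : PS | p.1 (shiftP γ φ) = b} ∩ {p : PS | p.1 φ = b}) := by
    ext p
    simp only [condA, mem_setOf_eq, mem_iInter, mem_iUnion, mem_inter_iff]
    constructor
    · exact fun H γ φ => ⟨p.1 φ, H γ φ, rfl⟩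
    · exact fun H γ φ => (H γ φ).choose_spec.1.trans (H γ φ).choose_spec.2.symm
  rw [hrw]
  exact MeasurableSet.iInter fun γ => MeasurableSet.iInter fun φ =>
    MeasurableSet.iUnion fun b => (measG _ _).inter (measG _ _)

lemma measRestrict (φ : FPC Γ) (S : Finset Γ) (ψ : FPC Γ) :
    MeasurableSet {p : PS | restrictTo (p.2.2 φ) S = ψ} := by
  by_cases hd : ∀ γ : Γ, γ ∈ S ↔ ψ.1 γ ≠ none
  · have hrw : {p : PS | restrictTo (p.2.2 φ) S = ψ}
        = ⋂ γ : {γ : Γ // γ ∈ S}, {p : PS | p.2.2 φ γ.1 = (ψ.1 γ.1).getD 0} := by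
      ext p
      simp only [mem_setOf_eq, mem_iInter]
      constructor
      · intro hr γ
        have hval := congrArg (fun χ : FPC Γ => χ.1 γ.1) hr
        simp only [restrictTo_fst, if_pos γ.2] at hval
        rw [← hval]
        rfl
      · intro hall
        apply Subtype.ext
        funext δ
        rw [restrictTo_fst]
        by_cases hδ : δ ∈ S
        · rw [if_pos hδ]
          obtain ⟨c, hc⟩ := Option.ne_none_iff_exists'.mp ((hd δ).mp hδ)
          rw [hc]
          have := hall ⟨δ, hδ⟩
          rw [hc] at this
          simp only [Option.getD_some] at this
          exact congrArg some this
        · rw [if_neg hδ]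
          by_contra hne
          exact hδ ((hd δ).mpr fun hn => hne hn.symm)
    rw [hrw]
    exact MeasurableSet.iInter fun γ => measWcoord φ γ.1 _
  · have hrw : {p : PS | restrictTo (p.2.2 φ) S = ψ} = (∅ : Set PS) := by
      rw [eq_empty_iff_forall_notMem]
      intro p hr
      apply hd
      intro γ
      rw [← hr, restrictTo_fst]
      by_cases hγ : γ ∈ S <;> simp [hγ]
    rw [hrw]
    exact MeasurableSet.empty

lemma measW : MeasurableSet {p : PS | condW p.1 p.2.2} := by
  have hrw : {p : PS | condW p.1 p.2.2}
      = ⋂ φ : FPC Γ, ({p : PS | p.1 φ = false}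
          ∪ ((⋂ γ : Γ, ⋂ c : ℕ, {p : PS | φ.1 γ = some c → p.2.2 φ γ = c})
            ∩ ⋂ S : Finset Γ, {p : PS | p.1 (restrictTo (p.2.2 φ) S) = true})) := by
    ext p
    simp only [condW, mem_setOf_eq, mem_iInter, mem_union, mem_inter_iff]
    constructor
    · intro H φ
      cases hb : p.1 φ with
      | false => exact Or.inl rfl
      | true => exact Or.inr ⟨fun γ c => (H φ hb).1 γ c, (H φ hb).2⟩
    · intro H φ hφ
      rcases H φ with hf | ⟨h1, h2⟩
      · rw [hφ] at hf
        cases hf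
      · exact ⟨fun γ c => h1 γ c, h2⟩
  rw [hrw]
  refine MeasurableSet.iInter fun φ => (measG φ false).union (MeasurableSet.inter ?_ ?_)
  · refine MeasurableSet.iInter fun γ => MeasurableSet.iInter fun c => ?_
    by_cases hcase : φ.1 γ = some c
    · have : {p : PS | φ.1 γ = some c → p.2.2 φ γ = c} = {p : PS | p.2.2 φ γ = c} := by
        ext p
        simp [hcase]
      rw [this]
      exact measWcoord φ γ c
    · have : {p : PS | φ.1 γ = some c → p.2.2 φ γ = c} = univ := by
        ext p
        simp [hcase]
      rw [this]
      exact MeasurableSet.univ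
  · refine MeasurableSet.iInter fun S => ?_
    have hrw2 : {p : PS | p.1 (restrictTo (p.2.2 φ) S) = true}
        = ⋃ ψ : FPC Γ, ({p : PS | restrictTo (p.2.2 φ) S = ψ} ∩ {p : PS | p.1 ψ = true}) := by
      ext p
      simp only [mem_setOf_eq, mem_iUnion, mem_inter_iff]
      constructor
      · intro hp
        exact ⟨restrictTo (p.2.2 φ) S, rfl, hp⟩
      · rintro ⟨ψ, hr, hg⟩
        rw [hr]
        exact hg
    rw [hrw2]
    exact MeasurableSet.iUnion fun ψ => (measRestrict φ S ψ).inter (measG ψ true)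

lemma measD1 (B : ℕ → Set X) : MeasurableSet {p : PS | condD1 B p.2.1} := by
  have hrw : {p : PS | condD1 B p.2.1}
      = ⋂ c : ℕ, ⋂ c' : ℕ, ⋂ m : ℕ, ⋂ m' : ℕ,
          {p : PS | c ≠ c' → p.2.1 c m = true → p.2.1 c' m' = true → B m ∩ B m' = ∅} := by
    ext p
    simp only [condD1, mem_setOf_eq, mem_iInter]
  rw [hrw]
  refine MeasurableSet.iInter fun c => MeasurableSet.iInter fun c' =>
    MeasurableSet.iInter fun m => MeasurableSet.iInter fun m' => ?_
  by_cases h1 : c = c'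
  · have : {p : PS | c ≠ c' → p.2.1 c m = true → p.2.1 c' m' = true → B m ∩ B m' = ∅}
        = univ := by
      ext p
      simp [h1]
    rw [this]
    exact MeasurableSet.univ
  by_cases h2 : B m ∩ B m' = ∅
  · have : {p : PS | c ≠ c' → p.2.1 c m = true → p.2.1 c' m' = true → B m ∩ B m' = ∅}
        = univ := by
      ext p
      simp [h2]
    rw [this]
    exact MeasurableSet.univ
  · have : {p : PS | c ≠ c' → p.2.1 c m = true → p.2.1 c' m' = true → B m ∩ B m' = ∅}
        = ({p : PS | p.2.1 c m = true} ∩ {p : PS | p.2.1 c' m' = true})ᶜ := by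
      ext p
      simp only [mem_setOf_eq, mem_compl_iff, mem_inter_iff]
      constructor
      · intro H hab
        exact h2 (H h1 hab.1 hab.2)
      · intro H _ ha hb
        exact (H ⟨ha, hb⟩).elim
    rw [this]
    exact ((measH c m true).inter (measH c' m' true)).compl

lemma measD2 (B : ℕ → Set X) : MeasurableSet {p : PS | condD2 B p.2.1} := by
  have hrw : {p : PS | condD2 B p.2.1}
      = ⋂ k : ℕ, {p : PS | (B k).Nonempty → ∃ c m, p.2.1 c m = true ∧ (B m ∩ B k).Nonempty} := by
    ext p
    simp only [condD2, mem_setOf_eq, mem_iInter]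
  rw [hrw]
  refine MeasurableSet.iInter fun k => ?_
  by_cases hk : (B k).Nonempty
  · have : {p : PS | (B k).Nonempty → ∃ c m, p.2.1 c m = true ∧ (B m ∩ B k).Nonempty}
        = ⋃ c : ℕ, ⋃ m : ℕ, ({p : PS | p.2.1 c m = true} ∩ {p : PS | (B m ∩ B k).Nonempty}) := by
      ext p
      simp only [mem_setOf_eq, mem_iUnion, mem_inter_iff]
      constructor
      · intro H
        obtain ⟨c, m, h1, h2⟩ := H hk
        exact ⟨c, m, h1, h2⟩
      · rintro ⟨c, m, h1, h2⟩ _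
        exact ⟨c, m, h1, h2⟩
    rw [this]
    refine MeasurableSet.iUnion fun c => MeasurableSet.iUnion fun m =>
      (measH c m true).inter ?_
    by_cases hmk : (B m ∩ B k).Nonempty
    · have : {p : PS | (B m ∩ B k).Nonempty} = univ := by ext p; simp [hmk]
      rw [this]; exact MeasurableSet.univ
    · have : {p : PS | (B m ∩ B k).Nonempty} = ∅ := by ext p; simp [hmk]
      rw [this]; exact MeasurableSet.empty
  · have : {p : PS | (B k).Nonempty → ∃ c m, p.2.1 c m = true ∧ (B m ∩ B k).Nonempty}
        = univ := by
      ext p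
      simp [hk]
    rw [this]
    exact MeasurableSet.univ

lemma measC (B : ℕ → Set X) : MeasurableSet {p : PS | condC B p.1 p.2.1} := by
  have hrw : {p : PS | condC B p.1 p.2.1}
      = ⋂ S : Finset Γ, ⋂ ψ : FPC Γ, ⋂ m : ({γ : Γ // γ ∈ S} → ℕ),
          {p : PS | (∀ γ : Γ, γ ∈ S ↔ ψ.1 γ ≠ none) → p.1 ψ = false →
            (∀ γ : {γ : Γ // γ ∈ S}, p.2.1 ((ψ.1 γ.1).getD 0) (m γ) = true) →
              (⋂ γ : {γ : Γ // γ ∈ S}, (fun x : X => γ.1 • x) ⁻¹' B (m γ)) = ∅} := by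
    ext p
    simp only [condC, mem_setOf_eq, mem_iInter]
    constructor
    · intro H S ψ m hdom hfalse hm
      exact H S ψ hdom hfalse m hm
    · intro H S ψ hdom hfalse m hm
      exact H S ψ m hdom hfalse hm
  rw [hrw]
  refine MeasurableSet.iInter fun S => MeasurableSet.iInter fun ψ =>
    MeasurableSet.iInter fun m => ?_
  by_cases hdom : ∀ γ : Γ, γ ∈ S ↔ ψ.1 γ ≠ none
  · by_cases hconc : (⋂ γ : {γ : Γ // γ ∈ S}, (fun x : X => γ.1 • x) ⁻¹' B (m γ)) = ∅
    · have : {p : PS | (∀ γ : Γ, γ ∈ S ↔ ψ.1 γ ≠ none) → p.1 ψ = false →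
            (∀ γ : {γ : Γ // γ ∈ S}, p.2.1 ((ψ.1 γ.1).getD 0) (m γ) = true) →
              (⋂ γ : {γ : Γ // γ ∈ S}, (fun x : X => γ.1 • x) ⁻¹' B (m γ)) = ∅} = univ := by
        ext p
        simp [hconc]
      rw [this]
      exact MeasurableSet.univ
    · have : {p : PS | (∀ γ : Γ, γ ∈ S ↔ ψ.1 γ ≠ none) → p.1 ψ = false →
            (∀ γ : {γ : Γ // γ ∈ S}, p.2.1 ((ψ.1 γ.1).getD 0) (m γ) = true) →
              (⋂ γ : {γ : Γ // γ ∈ S}, (fun x : X => γ.1 • x) ⁻¹' B (m γ)) = ∅}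
          = ({p : PS | p.1 ψ = false}
              ∩ ⋂ γ : {γ : Γ // γ ∈ S}, {p : PS | p.2.1 ((ψ.1 γ.1).getD 0) (m γ) = true})ᶜ := by
        ext p
        simp only [mem_setOf_eq, mem_compl_iff, mem_inter_iff, mem_iInter]
        constructor
        · intro H hab
          exact hconc (H hdom hab.1 fun γ => hab.2 γ)
        · intro H _ h1 h2
          exact (H ⟨h1, fun γ => h2 γ⟩).elim
      rw [this]
      exact ((measG ψ false).inter
        (MeasurableSet.iInter fun γ => measH _ _ true)).compl
  · have : {p : PS | (∀ γ : Γ, γ ∈ S ↔ ψ.1 γ ≠ none) → p.1 ψ = false →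
          (∀ γ : {γ : Γ // γ ∈ S}, p.2.1 ((ψ.1 γ.1).getD 0) (m γ) = true) →
            (⋂ γ : {γ : Γ // γ ∈ S}, (fun x : X => γ.1 • x) ⁻¹' B (m γ)) = ∅} = univ := by
      ext p
      simp [hdom]
    rw [this]
    exact MeasurableSet.univ

lemma measT (B : ℕ → Set X) :
    MeasurableSet {p : PS | condA p.1 ∧ condW p.1 p.2.2 ∧ condD1 B p.2.1
      ∧ condD2 B p.2.1 ∧ condC B p.1 p.2.1} :=
  measA.inter (measW.inter ((measD1 B).inter ((measD2 B).inter (measC B))))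

end MeasSection

end Stmt2Aux

/-- For a continuous action of `Γ` on a Polish space, the set of (codes of) subshifts
admitting a Baire measurable coloring is analytic. -/
theorem stmt2 {Γ : Type*} [Group Γ] [Countable Γ] [Infinite Γ]
    (X : Type*) [TopologicalSpace X] [PolishSpace X] [MulAction Γ X]
    (hcont : ∀ γ : Γ, Continuous fun x : X => γ • x) :
    MeasureTheory.AnalyticSet
      {g : FPC Γ → Bool | ∃ Ω : Set (Γ → ℕ), CodesSubshift g Ω ∧ HasBMColoring X Ω} := by
  classical
  haveI : BaireSpace X := by
    infer_instance
  obtain ⟨b, hbc, hbne, hbasis⟩ := TopologicalSpace.exists_countable_basis X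
  obtain ⟨B, hBrange⟩ := (hbc.insert ∅).exists_eq_range (insert_nonempty _ _)
  have hBo : ∀ n, IsOpen (B n) := by
    intro n
    have hmem : B n ∈ insert ∅ b := by rw [hBrange]; exact mem_range_self n
    rcases mem_insert_iff.mp hmem with h | h
    · rw [h]; exact isOpen_empty
    · exact hbasis.isOpen h
  have hBb : ∀ O : Set X, IsOpen O → ∀ x ∈ O, ∃ n, x ∈ B n ∧ B n ⊆ O := by
    intro O hO x hx
    obtain ⟨t, htb, hxt, htO⟩ := hbasis.exists_subset_of_mem_open hx hO
    have ht : t ∈ range B := by rw [← hBrange]; exact mem_insert_of_mem _ htb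
    obtain ⟨n, rfl⟩ := ht
    exact ⟨n, hxt, htO⟩
  have hset : {g : FPC Γ → Bool | ∃ Ω : Set (Γ → ℕ), CodesSubshift g Ω ∧ HasBMColoring X Ω}
      = Prod.fst '' {p : (FPC Γ → Bool) × (ℕ → ℕ → Bool) × (FPC Γ → Γ → ℕ) |
          condA p.1 ∧ condW p.1 p.2.2 ∧ condD1 B p.2.1 ∧ condD2 B p.2.1
            ∧ condC B p.1 p.2.1} := by
    ext g
    simp only [mem_setOf_eq, mem_image, Prod.exists]
    constructor
    · rintro ⟨Ω, hc, hb'⟩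
      obtain ⟨h, w, h1, h2, h3, h4, h5⟩ := key_mp hcont B hBo hBb hc hb'
      exact ⟨g, h, w, ⟨h1, h2, h3, h4, h5⟩, rfl⟩
    · rintro ⟨g', h, w, ⟨h1, h2, h3, h4, h5⟩, rfl⟩
      obtain ⟨hc, hb'⟩ := key_mpr hcont B hBo hBb h1 h2 h3 h4 h5
      exact ⟨OmegaOf g', hc, hb'⟩
  rw [hset]
  haveI : Countable (FPC Γ) := FPC.countable
  haveI i0 : BorelSpace (FPC Γ → Γ → ℕ) := inferInstance
  haveI i1 : BorelSpace ((ℕ → ℕ → Bool) × (FPC Γ → Γ → ℕ)) := inferInstance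
  haveI i2 : SecondCountableTopology ((ℕ → ℕ → Bool) × (FPC Γ → Γ → ℕ)) := inferInstance
  haveI i3 : SecondCountableTopologyEither (FPC Γ → Bool)
      ((ℕ → ℕ → Bool) × (FPC Γ → Γ → ℕ)) := inferInstance
  haveI hbsp : BorelSpace ((FPC Γ → Bool) × (ℕ → ℕ → Bool) × (FPC Γ → Γ → ℕ)) :=
    Prod.borelSpace
  haveI p5 : PolishSpace ((FPC Γ → Bool) × (ℕ → ℕ → Bool) × (FPC Γ → Γ → ℕ)) :=
    @PolishSpace.mk _ _ inferInstance inferInstance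
  exact (measT B).analyticSet.image_of_continuous continuous_fst

end DescColor
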